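/- There is a unique ℂ-algebra homomorphism ρ : ℂCl(2m) → End_ℂ(P) such that ρ(ι(f_I)) = Γ_I for every standard basis vector f_I of ℂ^{2m} (I = 1, …, 2m), and this homomorphism ρ is bijective; hence the complex Clifford algebra in dimension 2m is isomorphic as a ℂ-algebra to the full endomorphism algebra of the 2^m-dimensional space P. -/

import Mathlib

noncomputable section

/-- The spinor space `P`: complex functions on subsets of `Fin m`
(the fermionic Fock model of the exterior algebra of `ℂ^m`). -/
abbrev SpinorSpace (m : ℕ) := Finset (Fin m) → ℂ

/-- The creation operator `c_j`. -/
def creation {m : ℕ} (j : Fin m) (f : SpinorSpace m) : SpinorSpace m := fun S =>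
  if j ∈ S then (-1 : ℂ) ^ (S.filter fun i => i < j).card * f (S.erase j) else 0

/-- The annihilation operator `a_j`. -/
def annihilation {m : ℕ} (j : Fin m) (f : SpinorSpace m) : SpinorSpace m := fun S =>
  if j ∈ S then 0 else (-1 : ℂ) ^ (S.filter fun i => i < j).card * f (insert j S)

/-- The gamma operators `Γ_I`, `I = 1, …, 2m`, here indexed by `Fin (2 * m)` (0-based):
`Γ_j = c_j + a_j` and `Γ_{m+j} = i (c_j − a_j)` for `j = 1, …, m`. -/
def gammaOp {m : ℕ} (I : Fin (2 * m)) (f : SpinorSpace m) : SpinorSpace m :=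
  if h : (I : ℕ) < m then
    creation ⟨(I : ℕ), h⟩ f + annihilation ⟨(I : ℕ), h⟩ f
  else
    Complex.I • (creation ⟨(I : ℕ) - m, by have := I.isLt; omega⟩ f
      - annihilation ⟨(I : ℕ) - m, by have := I.isLt; omega⟩ f)

/-- The Hermitian inner product `⟨f, g⟩ = Σ_S conj (f S) * g S` on the spinor space. -/
def herm {m : ℕ} (f g : SpinorSpace m) : ℂ :=
  ∑ S : Finset (Fin m), (starRingEnd ℂ) (f S) * g S

/-- The standard quadratic form `Q v = Σ_I v_I²` on `ℂ^{2m}`. -/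
def Qstd (m : ℕ) : QuadraticForm ℂ (Fin (2 * m) → ℂ) :=
  QuadraticMap.weightedSumSquares ℂ (fun _ : Fin (2 * m) => (1 : ℂ))

namespace Spin
variable {m : ℕ}

def sg (S : Finset (Fin m)) (j : Fin m) : ℂ := (-1 : ℂ) ^ (S.filter fun i => i < j).card

lemma creation_def (j : Fin m) (f : SpinorSpace m) (S : Finset (Fin m)) :
    creation j f S = if j ∈ S then sg S j * f (S.erase j) else 0 := rfl

lemma annihilation_def (j : Fin m) (f : SpinorSpace m) (S : Finset (Fin m)) :
    annihilation j f S = if j ∈ S then 0 else sg S j * f (insert j S) := rfl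

lemma sg_insert {S : Finset (Fin m)} {k : Fin m} (hk : k ∉ S) (j : Fin m) :
    sg (insert k S) j = (if k < j then -1 else 1) * sg S j := by
  simp only [sg, Finset.filter_insert]
  split
  · rw [Finset.card_insert_of_notMem (by simp [hk]), pow_succ]
    ring
  · ring

lemma sg_erase {S : Finset (Fin m)} {k : Fin m} (hk : k ∈ S) (j : Fin m) :
    sg (S.erase k) j = (if k < j then -1 else 1) * sg S j := by
  have h2 : sg (insert k (S.erase k)) j = (if k < j then -1 else 1) * sg (S.erase k) j :=
    sg_insert (Finset.notMem_erase k S) j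
  rw [Finset.insert_erase hk] at h2
  rw [h2]
  split <;> ring

lemma sg_mul_self (S : Finset (Fin m)) (j : Fin m) : sg S j * sg S j = 1 := by
  simp [sg, ← pow_add]


lemma cc (j k : Fin m) (f : SpinorSpace m) (S : Finset (Fin m)) :
    creation j (creation k f) S + creation k (creation j f) S = 0 := by
  rcases eq_or_ne j k with rfl | hjk
  · simp [creation_def]
  by_cases hj : j ∈ S <;> by_cases hk : k ∈ S <;>
    simp [creation_def, hj, hk, Finset.mem_erase, hjk, hjk.symm]
  rw [Finset.erase_right_comm (a := j) (b := k), sg_erase hj k, sg_erase hk j]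
  rcases lt_or_gt_of_ne hjk with h | h <;> simp [h, h.not_gt, not_lt_of_gt] <;> ring

lemma aa (j k : Fin m) (f : SpinorSpace m) (S : Finset (Fin m)) :
    annihilation j (annihilation k f) S + annihilation k (annihilation j f) S = 0 := by
  rcases eq_or_ne j k with rfl | hjk
  · simp [annihilation_def]
  by_cases hj : j ∈ S <;> by_cases hk : k ∈ S <;>
    simp [annihilation_def, hj, hk, Finset.mem_insert, hjk, hjk.symm]
  rw [Finset.insert_comm, sg_insert hj k, sg_insert hk j]
  rcases lt_or_gt_of_ne hjk with h | h <;> simp [h, h.not_gt, not_lt_of_gt] <;> ring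

lemma ac (j k : Fin m) (f : SpinorSpace m) (S : Finset (Fin m)) :
    annihilation j (creation k f) S + creation k (annihilation j f) S
      = if j = k then f S else 0 := by
  rcases eq_or_ne j k with rfl | hjk
  · by_cases hj : j ∈ S <;>
      simp [annihilation_def, creation_def, hj, Finset.mem_insert, Finset.mem_erase,
        Finset.erase_insert, Finset.insert_erase, hj, Finset.notMem_erase]
    · rw [sg_erase hj j]
      simp only [lt_self_iff_false, if_false, one_mul, ← mul_assoc, sg_mul_self]
    · rw [sg_insert hj j]
      simp only [lt_self_iff_false, if_false, one_mul, ← mul_assoc, sg_mul_self]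
  · simp only [hjk, if_false]
    by_cases hj : j ∈ S <;> by_cases hk : k ∈ S <;>
      simp [annihilation_def, creation_def, hj, hk, Finset.mem_insert, Finset.mem_erase,
        hjk, hjk.symm]
    rw [Finset.erase_insert_of_ne hjk, sg_insert hj k, sg_erase hk j]
    rcases lt_or_gt_of_ne hjk with h | h <;> simp [h, h.not_gt, not_lt_of_gt] <;> ring

def cE (j : Fin m) : Module.End ℂ (SpinorSpace m) where
  toFun := creation j
  map_add' f g := by
    funext S; simp only [creation_def, Pi.add_apply]; split <;> ring
  map_smul' c f := by
    funext S; simp only [creation_def, Pi.smul_apply, RingHom.id_apply, smul_eq_mul]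
    split <;> ring

def aE (j : Fin m) : Module.End ℂ (SpinorSpace m) where
  toFun := annihilation j
  map_add' f g := by
    funext S; simp only [annihilation_def, Pi.add_apply]; split <;> ring
  map_smul' c f := by
    funext S; simp only [annihilation_def, Pi.smul_apply, RingHom.id_apply, smul_eq_mul]
    split <;> ring

@[simp] lemma cE_apply (j : Fin m) (f : SpinorSpace m) : cE j f = creation j f := rfl
@[simp] lemma aE_apply (j : Fin m) (f : SpinorSpace m) : aE j f = annihilation j f := rfl

lemma ccE (j k : Fin m) : cE (m := m) j * cE k + cE k * cE j = 0 := by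
  apply LinearMap.ext fun f => funext fun S => ?_
  simpa using cc j k f S

lemma aaE (j k : Fin m) : aE (m := m) j * aE k + aE k * aE j = 0 := by
  apply LinearMap.ext fun f => funext fun S => ?_
  simpa using aa j k f S

lemma acE (j k : Fin m) : aE (m := m) j * cE k + cE k * aE j = if j = k then 1 else 0 := by
  apply LinearMap.ext fun f => funext fun S => ?_
  have := ac j k f S
  by_cases h : j = k <;>
    simpa [h, Module.End.mul_apply] using this

def gE (I : Fin (2 * m)) : Module.End ℂ (SpinorSpace m) :=
  if h : (I : ℕ) < m then
    cE ⟨(I : ℕ), h⟩ + aE ⟨(I : ℕ), h⟩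
  else
    Complex.I • (cE ⟨(I : ℕ) - m, by have := I.isLt; omega⟩
      - aE ⟨(I : ℕ) - m, by have := I.isLt; omega⟩)

lemma gE_apply (I : Fin (2 * m)) (f : SpinorSpace m) : gE I f = gammaOp I f := by
  unfold gE gammaOp
  split <;> simp

lemma two_smul_one : ((2:ℂ) • (1:Module.End ℂ (SpinorSpace m))) = 1 + 1 := by
  norm_num [two_smul]

lemma gE_rel (I J : Fin (2 * m)) :
    gE (m := m) I * gE J + gE J * gE I = if I = J then (2:ℂ) • 1 else 0 := by
  unfold gE
  by_cases hI : (I : ℕ) < m <;> by_cases hJ : (J : ℕ) < m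
  · rw [dif_pos hI, dif_pos hJ]
    set j : Fin m := ⟨I, hI⟩
    set k : Fin m := ⟨J, hJ⟩
    have h1 := ccE j k
    have h2 := aaE j k
    have h3 := acE j k
    have h4 := acE k j
    have hIJ : (I = J) ↔ (j = k) := by
      constructor
      · rintro rfl; rfl
      · intro h
        have h' : j.val = k.val := congrArg Fin.val h
        exact Fin.ext h'
    calc (cE j + aE j) * (cE k + aE k) + (cE k + aE k) * (cE j + aE j)
        = (cE j * cE k + cE k * cE j) + ((aE j * aE k + aE k * aE j)
            + ((aE j * cE k + cE k * aE j) + (aE k * cE j + cE j * aE k))) := by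
          noncomm_ring
      _ = if I = J then (2:ℂ) • 1 else 0 := by
          rw [h1, h2, h3, h4, two_smul_one]
          rcases eq_or_ne j k with h | h
          · simp [h, hIJ.mpr h]
          · simp [h, Ne.symm h, hIJ, h]
  · -- I < m ≤ J
    rw [dif_pos hI, dif_neg hJ, if_neg (by rintro rfl; exact hJ hI)]
    set j : Fin m := ⟨I, hI⟩
    set k : Fin m := ⟨(J : ℕ) - m, by have := J.isLt; omega⟩
    rw [mul_smul_comm, smul_mul_assoc, ← smul_add]
    have hb : (cE j + aE j) * (cE k - aE k) + (cE k - aE k) * (cE j + aE j) = 0 := by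
      calc (cE j + aE j) * (cE k - aE k) + (cE k - aE k) * (cE j + aE j)
          = (cE j * cE k + cE k * cE j) - (aE j * aE k + aE k * aE j)
            + ((aE j * cE k + cE k * aE j) - (aE k * cE j + cE j * aE k)) := by
            simp only [mul_sub, sub_mul, mul_add, add_mul]; abel
        _ = 0 := by
            rw [ccE, aaE, acE, acE]
            rcases eq_or_ne j k with h | h
            · simp [h]
            · simp [h, h.symm]
    rw [hb, smul_zero]
  · -- J < m ≤ I
    rw [dif_neg hI, dif_pos hJ, if_neg (by rintro rfl; exact hI hJ)]
    set j : Fin m := ⟨(I : ℕ) - m, by have := I.isLt; omega⟩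
    set k : Fin m := ⟨J, hJ⟩
    rw [mul_smul_comm, smul_mul_assoc, ← smul_add]
    have hb : (cE j - aE j) * (cE k + aE k) + (cE k + aE k) * (cE j - aE j) = 0 := by
      calc (cE j - aE j) * (cE k + aE k) + (cE k + aE k) * (cE j - aE j)
          = (cE j * cE k + cE k * cE j) - (aE j * aE k + aE k * aE j)
            + ((aE k * cE j + cE j * aE k) - (aE j * cE k + cE k * aE j)) := by
            simp only [mul_sub, sub_mul, mul_add, add_mul]; abel
        _ = 0 := by
            rw [ccE, aaE, acE, acE]
            rcases eq_or_ne j k with h | h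
            · simp [h]
            · simp [h, h.symm]
    rw [hb, smul_zero]
  · -- both ≥ m
    rw [dif_neg hI, dif_neg hJ]
    set j : Fin m := ⟨(I : ℕ) - m, by have := I.isLt; omega⟩
    set k : Fin m := ⟨(J : ℕ) - m, by have := J.isLt; omega⟩
    have hIJ : (I = J) ↔ (j = k) := by
      constructor
      · rintro rfl; rfl
      · intro h
        have h' : j.val = k.val := congrArg Fin.val h
        have hI' := I.isLt; have hJ' := J.isLt
        apply Fin.ext
        simp only [j, k] at h'
        omega
    rw [smul_mul_assoc, mul_smul_comm, smul_smul, Complex.I_mul_I,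
        smul_mul_assoc, mul_smul_comm, smul_smul, Complex.I_mul_I, ← smul_add]
    have hb : (cE j - aE j) * (cE k - aE k) + (cE k - aE k) * (cE j - aE j)
        = if j = k then ((-2:ℂ)) • 1 else 0 := by
      calc (cE j - aE j) * (cE k - aE k) + (cE k - aE k) * (cE j - aE j)
          = (cE j * cE k + cE k * cE j) + (aE j * aE k + aE k * aE j)
            - ((aE j * cE k + cE k * aE j) + (aE k * cE j + cE j * aE k)) := by
            simp only [mul_sub, sub_mul, mul_add, add_mul]; abel
        _ = _ := by
            rw [ccE, aaE, acE, acE]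
            rcases eq_or_ne j k with h | h
            · simp only [h, if_pos rfl, if_true]
              module
            · simp [h, h.symm]
    rw [hb]
    rcases eq_or_ne j k with h | h
    · rw [if_pos h, if_pos (hIJ.mpr h), smul_smul]
      norm_num
    · rw [if_neg h, if_neg (fun hh => h (hIJ.mp hh)), smul_zero]

def gamma : (Fin (2 * m) → ℂ) →ₗ[ℂ] Module.End ℂ (SpinorSpace m) :=
  (Pi.basisFun ℂ (Fin (2 * m))).constr ℂ gE

lemma gamma_apply (v : Fin (2 * m) → ℂ) : gamma (m := m) v = ∑ I, v I • gE I := by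
  rw [gamma, Module.Basis.constr_apply_fintype]
  simp [Pi.basisFun_equivFun]

lemma gamma_single (I : Fin (2 * m)) : gamma (m := m) (Pi.single I 1) = gE I := by
  rw [gamma_apply]
  rw [Finset.sum_eq_single I]
  · simp
  · intro b _ hb; simp [Pi.single_eq_of_ne hb]
  · simp

lemma gamma_sq (v : Fin (2 * m) → ℂ) :
    gamma (m := m) v * gamma v = algebraMap ℂ _ (Qstd m v) := by
  have key : (2:ℂ) • (gamma (m := m) v * gamma v)
      = (2:ℂ) • (algebraMap ℂ (Module.End ℂ (SpinorSpace m)) (Qstd m v)) := by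
    have expand : gamma (m := m) v * gamma v
        = ∑ I, ∑ J, (v I * v J) • (gE I * gE J) := by
      rw [gamma_apply, Finset.sum_mul_sum]
      refine Finset.sum_congr rfl fun I _ => Finset.sum_congr rfl fun J _ => ?_
      rw [smul_mul_assoc, mul_smul_comm, smul_smul]
    have expand' : gamma (m := m) v * gamma v
        = ∑ I, ∑ J, (v I * v J) • (gE J * gE I) := by
      rw [expand, Finset.sum_comm]
      refine Finset.sum_congr rfl fun I _ => Finset.sum_congr rfl fun J _ => ?_
      rw [mul_comm]
    calc (2:ℂ) • (gamma (m := m) v * gamma v)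
        = gamma v * gamma v + gamma v * gamma v := two_smul ℂ _
      _ = ∑ I, ∑ J, (v I * v J) • (gE I * gE J + gE J * gE I) := by
          nth_rewrite 2 [expand']
          rw [expand, ← Finset.sum_add_distrib]
          refine Finset.sum_congr rfl fun I _ => ?_
          rw [← Finset.sum_add_distrib]
          refine Finset.sum_congr rfl fun J _ => ?_
          rw [smul_add]
      _ = ∑ I, (v I * v I) • ((2:ℂ) • (1 : Module.End ℂ (SpinorSpace m))) := by
          refine Finset.sum_congr rfl fun I _ => ?_
          rw [Finset.sum_eq_single I]
          · rw [gE_rel, if_pos rfl]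
          · intro J _ hJ; rw [gE_rel, if_neg (Ne.symm hJ), smul_zero]
          · intro h; exact absurd (Finset.mem_univ I) h
      _ = (2:ℂ) • (algebraMap ℂ (Module.End ℂ (SpinorSpace m)) (Qstd m v)) := by
          rw [Algebra.algebraMap_eq_smul_one, Qstd,
            QuadraticMap.weightedSumSquares_apply]
          simp only [one_mul, smul_eq_mul, Finset.smul_sum, Finset.sum_smul, smul_smul]
          exact Finset.sum_congr rfl fun I _ => by ring_nf
  exact smul_right_injective _ (two_ne_zero) key

def rho : CliffordAlgebra (Qstd m) →ₐ[ℂ] Module.End ℂ (SpinorSpace m) :=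
  CliffordAlgebra.lift (Qstd m) ⟨gamma, gamma_sq⟩

lemma rho_ι (v : Fin (2 * m) → ℂ) : rho (m := m) (CliffordAlgebra.ι (Qstd m) v) = gamma v :=
  CliffordAlgebra.lift_ι_apply _ _ _

lemma rho_prop (I : Fin (2 * m)) (f : SpinorSpace m) :
    rho (m := m) (CliffordAlgebra.ι (Qstd m) (Pi.single I 1)) f = gammaOp I f := by
  rw [rho_ι, gamma_single, gE_apply]

lemma rho_unique (ρ' : CliffordAlgebra (Qstd m) →ₐ[ℂ] Module.End ℂ (SpinorSpace m))
    (h : ∀ (I : Fin (2 * m)) (f : SpinorSpace m),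
      ρ' (CliffordAlgebra.ι (Qstd m) (Pi.single I 1)) f = gammaOp I f) :
    ρ' = rho := by
  apply CliffordAlgebra.hom_ext
  apply Module.Basis.ext (Pi.basisFun ℂ (Fin (2 * m)))
  intro I
  apply LinearMap.ext fun f => ?_
  have hb : (Pi.basisFun ℂ (Fin (2 * m))) I = Pi.single I 1 := by
    ext J; simp [Pi.basisFun_apply]
  simp only [LinearMap.comp_apply, AlgHom.toLinearMap_apply, hb]
  rw [h I f, rho_prop I f]

/-! ### Matrix units and surjectivity -/

def delta (S : Finset (Fin m)) : SpinorSpace m := Pi.single S 1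

def EST (S T : Finset (Fin m)) : Module.End ℂ (SpinorSpace m) where
  toFun f := f T • delta S
  map_add' f g := by simp [add_smul]
  map_smul' c f := by simp [smul_smul]

lemma EST_apply (S T : Finset (Fin m)) (f : SpinorSpace m) :
    EST S T f = f T • delta S := rfl

lemma end_eq_sum_EST (x : Module.End ℂ (SpinorSpace m)) :
    x = ∑ p : Finset (Fin m) × Finset (Fin m), (x (delta p.2) p.1) • EST p.1 p.2 := by
  apply LinearMap.ext fun f => funext fun U => ?_
  have hf : f = ∑ T : Finset (Fin m), f T • delta T := by
    funext V
    rw [Finset.sum_apply, Finset.sum_eq_single V]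
    · simp [delta]
    · intro b _ hb
      simp [delta, Pi.single_apply, Ne.symm hb]
    · simp
  calc x f U = ∑ T : Finset (Fin m), f T • (x (delta T)) U := by
        conv_lhs => rw [hf]
        rw [map_sum]
        rw [Finset.sum_apply]
        simp
    _ = _ := by
        rw [LinearMap.sum_apply, Finset.sum_apply, Fintype.sum_prod_type_right]
        refine Finset.sum_congr rfl fun T _ => ?_
        rw [Finset.sum_eq_single U]
        · simp [EST_apply, delta, Pi.single_apply, mul_comm]
        · intro S _ hS
          simp [EST_apply, delta, Pi.single_apply, Ne.symm hS]
        · simp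

lemma gE_low (j : Fin m) :
    gE (m := m) ⟨(j : ℕ), by have := j.isLt; omega⟩ = cE j + aE j := by
  unfold gE
  rw [dif_pos j.isLt]

lemma gE_high (j : Fin m) :
    gE (m := m) ⟨m + (j : ℕ), by have := j.isLt; omega⟩
      = Complex.I • (cE j - aE j) := by
  unfold gE
  rw [dif_neg (show ¬ (m + (j:ℕ) < m) by omega)]
  congr 1
  congr 1 <;> exact congrArg _ (Fin.ext (by simp))

variable (m) in
def AIm : Subalgebra ℂ (Module.End ℂ (SpinorSpace m)) := (rho (m := m)).range

lemma gE_mem (I : Fin (2 * m)) : gE I ∈ AIm m :=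
  ⟨CliffordAlgebra.ι (Qstd m) (Pi.single I 1), by
    show rho (CliffordAlgebra.ι (Qstd m) (Pi.single I 1)) = gE I
    rw [rho_ι, gamma_single]⟩

lemma cE_mem (j : Fin m) : cE j ∈ AIm m := by
  have h : cE j = (2⁻¹ : ℂ) • ((cE j + aE j) + (1:ℂ) • (cE j - aE j)) := by module
  have hI : ((-Complex.I) * Complex.I : ℂ) = 1 := by
    simp [Complex.I_mul_I]
  rw [h, ← hI, ← smul_smul, ← gE_high j, ← gE_low j]
  exact Subalgebra.smul_mem _ (add_mem (gE_mem _) (Subalgebra.smul_mem _ (gE_mem _) _)) _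

lemma aE_mem (j : Fin m) : aE j ∈ AIm m := by
  have h : aE j = (2⁻¹ : ℂ) • ((cE j + aE j) + (-1:ℂ) • (cE j - aE j)) := by module
  have hI : ((Complex.I) * Complex.I : ℂ) = -1 := Complex.I_mul_I
  rw [h, ← hI, ← smul_smul, ← gE_high j, ← gE_low j]
  exact Subalgebra.smul_mem _ (add_mem (gE_mem _) (Subalgebra.smul_mem _ (gE_mem _) _)) _

lemma acSelf (j : Fin m) (f : SpinorSpace m) (S : Finset (Fin m)) :
    annihilation j (creation j f) S = if j ∈ S then 0 else f S := by
  by_cases hj : j ∈ S <;> simp [annihilation_def, creation_def, hj]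
  rw [sg_insert hj j]
  simp only [lt_self_iff_false, if_false, one_mul, ← mul_assoc, sg_mul_self, one_mul]

def Nops : ℕ → Module.End ℂ (SpinorSpace m)
  | 0 => 1
  | (k+1) => Nops k * (if h : k < m then aE ⟨k, h⟩ * cE ⟨k, h⟩ else 1)

lemma Nops_mem (k : ℕ) : Nops (m := m) k ∈ AIm m := by
  induction k with
  | zero => exact one_mem _
  | succ k ih =>
    rw [Nops]
    refine mul_mem ih ?_
    split
    · exact mul_mem (aE_mem _) (cE_mem _)
    · exact one_mem _

lemma Nops_apply (k : ℕ) (f : SpinorSpace m) (S : Finset (Fin m)) :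
    Nops k f S = if ∀ i ∈ S, k ≤ (i : ℕ) then f S else 0 := by
  induction k generalizing f with
  | zero => simp [Nops]
  | succ k ih =>
    rw [Nops]
    by_cases hk : k < m
    · rw [dif_pos hk]
      rw [Module.End.mul_apply, Module.End.mul_apply, ih]
      have hg : ∀ U, annihilation ⟨k, hk⟩ (creation ⟨k, hk⟩ f) U
          = if (⟨k, hk⟩ : Fin m) ∈ U then 0 else f U := fun U => acSelf _ f U
      by_cases h1 : ∀ i ∈ S, (k:ℕ) ≤ i
      · by_cases h2 : ∀ i ∈ S, k + 1 ≤ (i:ℕ)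
        · have hks : (⟨k, hk⟩ : Fin m) ∉ S := fun hmem => by
            have := h2 _ hmem; simp at this
          rw [if_pos h1, if_pos h2]
          simp [hg, hks]
        · push_neg at h2
          obtain ⟨i, hi, hik⟩ := h2
          have heq : (⟨k, hk⟩ : Fin m) = i := Fin.ext
            (show k = (i:ℕ) by have := h1 i hi; omega)
          rw [if_pos h1, if_neg (by push_neg; exact ⟨i, hi, by omega⟩)]
          simp only [aE_apply, cE_apply]
          rw [hg, if_pos (show (⟨k,hk⟩:Fin m) ∈ S by rw [heq]; exact hi)]
      · rw [if_neg h1, if_neg (by push_neg at h1 ⊢; obtain ⟨i, hi, h⟩ := h1; exact ⟨i, hi, by omega⟩)]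
    · rw [dif_neg hk, mul_one, ih]
      have : (∀ i ∈ S, (k:ℕ) ≤ i) ↔ (∀ i ∈ S, k + 1 ≤ (i:ℕ)) := by
        constructor <;> intro h i hi <;> have h2 := i.isLt <;> have := h i hi <;> omega
      rw [if_congr this rfl rfl]

lemma Nops_m : Nops (m := m) m = EST ∅ ∅ := by
  apply LinearMap.ext fun f => funext fun S => ?_
  rw [Nops_apply, EST_apply]
  rcases eq_or_ne S ∅ with rfl | hS
  · simp [delta]
  · rw [if_neg, Pi.smul_apply]
    · simp [delta, Pi.single_apply, hS]
    · push_neg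
      obtain ⟨i, hi⟩ := Finset.nonempty_iff_ne_empty.mpr hS
      exact ⟨i, hi, i.isLt⟩

lemma cE_mul_EST (j : Fin m) (S T : Finset (Fin m)) (hj : j ∉ S) :
    cE j * EST S T = sg S j • EST (insert j S) T := by
  apply LinearMap.ext fun f => funext fun U => ?_
  rw [Module.End.mul_apply, cE_apply]
  rw [LinearMap.smul_apply]
  simp only [EST_apply, creation_def]
  rcases eq_or_ne U (insert j S) with rfl | hU
  · rw [if_pos (Finset.mem_insert_self j S), Finset.erase_insert hj, sg_insert hj j]
    simp [delta, Pi.single_apply, smul_smul]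
  · by_cases hjU : j ∈ U
    · rw [if_pos hjU]
      have h1 : U.erase j ≠ S := by
        intro h
        apply hU
        rw [← h, Finset.insert_erase hjU]
      have h2 : U ≠ insert j S := hU
      simp [delta, Pi.single_apply, h1, h2, Pi.smul_apply]
    · rw [if_neg hjU]
      have h2 : U ≠ insert j S := fun h => hjU (h ▸ Finset.mem_insert_self j S)
      simp [delta, Pi.single_apply, h2, Pi.smul_apply]

lemma EST_mul_aE (j : Fin m) (S T : Finset (Fin m)) (hj : j ∉ T) :
    EST S T * aE j = sg T j • EST S (insert j T) := by
  apply LinearMap.ext fun f => funext fun U => ?_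
  rw [Module.End.mul_apply, LinearMap.smul_apply]
  simp only [EST_apply, aE_apply, annihilation_def, if_neg hj]
  simp [Pi.smul_apply, smul_smul, mul_assoc]

lemma EST_empty_mem (T : Finset (Fin m)) : EST ∅ T ∈ AIm m := by
  induction T using Finset.induction_on with
  | empty => rw [← Nops_m]; exact Nops_mem m
  | @insert j T hj ih =>
    have h := EST_mul_aE j ∅ T hj
    have h2 : EST (∅ : Finset (Fin m)) (insert j T) = sg T j • (EST ∅ T * aE j) := by
      rw [h, smul_smul, sg_mul_self, one_smul]
    rw [h2]
    exact Subalgebra.smul_mem _ (mul_mem ih (aE_mem j)) _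

lemma EST_mem (S T : Finset (Fin m)) : EST S T ∈ AIm m := by
  induction S using Finset.induction_on with
  | empty => exact EST_empty_mem T
  | @insert j S hj ih =>
    have h := cE_mul_EST j S T hj
    have h2 : EST (insert j S) T = sg S j • (cE j * EST S T) := by
      rw [h, smul_smul, sg_mul_self, one_smul]
    rw [h2]
    exact Subalgebra.smul_mem _ (mul_mem (cE_mem j) ih) _

lemma rho_surjective : Function.Surjective (rho (m := m)) := by
  intro x
  have hx : x ∈ AIm m := by
    rw [end_eq_sum_EST x]
    exact Subalgebra.sum_mem _ fun p _ => Subalgebra.smul_mem _ (EST_mem p.1 p.2) _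
  exact hx

/-! ### Dimension bound for the Clifford algebra -/

def eCl (I : Fin (2 * m)) : CliffordAlgebra (Qstd m) :=
  CliffordAlgebra.ι (Qstd m) (Pi.single I 1)

lemma Qstd_apply (v : Fin (2 * m) → ℂ) : Qstd m v = ∑ i, v i * v i := by
  simp [Qstd, QuadraticMap.weightedSumSquares_apply]

lemma eCl_sq (I : Fin (2 * m)) : eCl (m := m) I * eCl I = 1 := by
  rw [eCl, CliffordAlgebra.ι_sq_scalar, Qstd_apply]
  rw [Finset.sum_eq_single I]
  · simp
  · intro b _ hb; simp [Pi.single_eq_of_ne hb]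
  · simp

lemma eCl_anticomm {I J : Fin (2 * m)} (h : I ≠ J) :
    eCl (m := m) I * eCl J = -(eCl J * eCl I) := by
  have hpolar : QuadraticMap.polar (⇑(Qstd m)) (Pi.single I 1) (Pi.single J 1) = 0 := by
    rw [QuadraticMap.polar]
    rw [Qstd_apply, Qstd_apply, Qstd_apply]
    rw [← Finset.sum_sub_distrib, ← Finset.sum_sub_distrib]
    apply Finset.sum_eq_zero
    intro i _
    rcases eq_or_ne i I with rfl | hI <;> rcases eq_or_ne i J with rfl | hJ
    · exact absurd rfl h
    · simp [Pi.single_eq_of_ne hJ, Pi.single_eq_of_ne, hJ]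
    · simp [Pi.single_eq_of_ne hI]
    · simp [Pi.single_eq_of_ne hI, Pi.single_eq_of_ne hJ]
  have := CliffordAlgebra.ι_mul_ι_add_swap (Q := Qstd m) (Pi.single I 1) (Pi.single J 1)
  rw [hpolar, map_zero] at this
  rw [eCl, eCl]
  exact eq_neg_of_add_eq_zero_left this

def BB (A : Finset (Fin (2 * m))) : CliffordAlgebra (Qstd m) :=
  ((A.sort (· ≤ ·)).map eCl).prod

lemma BB_empty : BB (m := m) ∅ = 1 := by simp [BB]

lemma BB_insert {j : Fin (2 * m)} {A : Finset (Fin (2 * m))} (hj : j ∉ A)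
    (h : ∀ i ∈ A, j ≤ i) : BB (insert j A) = eCl j * BB A := by
  rw [BB, Finset.sort_insert _ h hj]
  simp [BB]

lemma BB_singleton (j : Fin (2 * m)) : BB (m := m) {j} = eCl j := by
  rw [BB, Finset.sort_singleton]
  simp

lemma BB_decomp {A : Finset (Fin (2 * m))} (hne : A.Nonempty) :
    BB (m := m) A = eCl (A.min' hne) * BB (A.erase (A.min' hne)) := by
  conv_lhs => rw [← Finset.insert_erase (A.min'_mem hne)]
  rw [BB_insert (Finset.notMem_erase _ _)]
  intro i hi
  exact A.min'_le i (Finset.mem_of_mem_erase hi)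

lemma Bspan : ∀ (n : ℕ) (A : Finset (Fin (2 * m))), A.card ≤ n → ∀ I : Fin (2 * m),
    eCl I * BB A ∈ Submodule.span ℂ (BB (m := m) '' {C | C ⊆ insert I A}) := by
  intro n
  induction n with
  | zero =>
    intro A hA I
    rw [Finset.card_eq_zero.mp (Nat.le_zero.mp hA)]
    rw [BB_empty, mul_one, ← BB_singleton]
    exact Submodule.subset_span ⟨{I}, by simp, rfl⟩
  | succ n ih =>
    intro A hA I
    rcases A.eq_empty_or_nonempty with rfl | hne
    · rw [BB_empty, mul_one, ← BB_singleton]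
      exact Submodule.subset_span ⟨{I}, by simp, rfl⟩
    set J := A.min' hne with hJ
    set A' := A.erase J with hA'
    have hJA : J ∈ A := A.min'_mem hne
    have hcard : A'.card ≤ n := by
      rw [hA', Finset.card_erase_of_mem hJA]
      have := Finset.card_pos.mpr hne
      omega
    have hdecomp := BB_decomp hne
    have hA'gt : ∀ i ∈ A', J < i := fun i hi =>
      lt_of_le_of_ne (A.min'_le i (Finset.mem_of_mem_erase hi))
        (Ne.symm (Finset.ne_of_mem_erase hi))
    rcases lt_trichotomy I J with hIJ | hIJ | hIJ
    · -- I < J ≤ everything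
      have hIA : I ∉ A := fun hI => absurd (A.min'_le I hI) (not_le.mpr hIJ)
      have hle : ∀ i ∈ A, I ≤ i := fun i hi => le_of_lt (lt_of_lt_of_le hIJ (A.min'_le i hi))
      rw [← BB_insert hIA hle]
      exact Submodule.subset_span ⟨insert I A, by simp [Set.mem_setOf_eq], rfl⟩
    · -- I = J
      rw [hdecomp, ← mul_assoc, hIJ, eCl_sq, one_mul]
      refine Submodule.subset_span ⟨A', ?_, rfl⟩
      exact fun x hx => Finset.mem_insert_of_mem (Finset.mem_of_mem_erase hx)
    · -- J < I
      have hne' : I ≠ J := (ne_of_gt hIJ)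
      rw [hdecomp, ← mul_assoc, eCl_anticomm hne', neg_mul, mul_assoc, neg_mem_iff]
      have h0 := ih A' hcard I
      have h1 : eCl J * (eCl I * BB A')
          ∈ Submodule.map (LinearMap.mulLeft ℂ (eCl (m := m) J))
              (Submodule.span ℂ (BB (m := m) '' {C | C ⊆ insert I A'})) :=
        Submodule.mem_map_of_mem h0
      rw [Submodule.map_span] at h1
      refine Submodule.span_le.mpr ?_ h1
      rintro x ⟨y, ⟨C, hC, rfl⟩, rfl⟩
      have hCgt : ∀ i ∈ C, J < i := by
        intro i hi
        rcases Finset.mem_insert.mp (hC hi) with rfl | hi'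
        · exact hIJ
        · exact hA'gt i hi'
      have hJC : J ∉ C := fun hmem => lt_irrefl J (hCgt J hmem)
      have : (LinearMap.mulLeft ℂ (eCl (m := m) J)) (BB C) = BB (insert J C) := by
        rw [LinearMap.mulLeft_apply, BB_insert hJC (fun i hi => le_of_lt (hCgt i hi))]
      rw [this]
      apply Submodule.subset_span
      refine ⟨insert J C, ?_, rfl⟩
      intro x hx
      rcases Finset.mem_insert.mp hx with rfl | hx'
      · exact Finset.mem_insert_of_mem hJA
      · rcases Finset.mem_insert.mp (hC hx') with rfl | hx''
        · exact Finset.mem_insert_self _ _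
        · exact Finset.mem_insert_of_mem (Finset.mem_of_mem_erase hx'')

lemma eCl_mul_mem {x : CliffordAlgebra (Qstd m)} (I : Fin (2 * m))
    (hx : x ∈ Submodule.span ℂ (Set.range (BB (m := m)))) :
    eCl I * x ∈ Submodule.span ℂ (Set.range (BB (m := m))) := by
  have h1 : eCl I * x
      ∈ Submodule.map (LinearMap.mulLeft ℂ (eCl (m := m) I))
          (Submodule.span ℂ (Set.range (BB (m := m)))) := Submodule.mem_map_of_mem hx
  rw [Submodule.map_span] at h1
  refine Submodule.span_le.mpr ?_ h1
  rintro y ⟨z, ⟨A, rfl⟩, rfl⟩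
  rw [LinearMap.mulLeft_apply]
  have := Bspan A.card A le_rfl I
  refine Submodule.span_le.mpr ?_ this
  rintro w ⟨C, _, rfl⟩
  exact Submodule.subset_span ⟨C, rfl⟩

lemma BB_mul_mem : ∀ (n : ℕ) (A : Finset (Fin (2 * m))), A.card ≤ n →
    ∀ x ∈ Submodule.span ℂ (Set.range (BB (m := m))),
    BB A * x ∈ Submodule.span ℂ (Set.range (BB (m := m))) := by
  intro n
  induction n with
  | zero =>
    intro A hA x hx
    rw [Finset.card_eq_zero.mp (Nat.le_zero.mp hA), BB_empty, one_mul]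
    exact hx
  | succ n ih =>
    intro A hA x hx
    rcases A.eq_empty_or_nonempty with rfl | hne
    · rw [BB_empty, one_mul]; exact hx
    have hJA : A.min' hne ∈ A := A.min'_mem hne
    have hcard : (A.erase (A.min' hne)).card ≤ n := by
      rw [Finset.card_erase_of_mem hJA]
      have := Finset.card_pos.mpr hne
      omega
    rw [BB_decomp hne, mul_assoc]
    exact eCl_mul_mem _ (ih _ hcard x hx)

lemma span_BB_top : Submodule.span ℂ (Set.range (BB (m := m))) = ⊤ := by
  rw [Submodule.eq_top_iff']
  intro x
  set W := Submodule.span ℂ (Set.range (BB (m := m))) with hW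
  have hBBW : ∀ A, BB (m := m) A ∈ W := fun A => Submodule.subset_span ⟨A, rfl⟩
  have hmul : ∀ x ∈ W, ∀ y ∈ W, x * y ∈ W := by
    intro x hx
    refine Submodule.span_induction ?_ ?_ ?_ ?_ hx
    · rintro z ⟨A, rfl⟩ y hy
      exact BB_mul_mem A.card A le_rfl y hy
    · intro y _; rw [zero_mul]; exact W.zero_mem
    · intro a b _ _ ha hb y hy
      rw [add_mul]; exact W.add_mem (ha y hy) (hb y hy)
    · intro c a _ ha y hy
      rw [smul_mul_assoc]; exact W.smul_mem c (ha y hy)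
  induction x using CliffordAlgebra.induction with
  | algebraMap r =>
    rw [Algebra.algebraMap_eq_smul_one, ← BB_empty]
    exact W.smul_mem r (hBBW ∅)
  | ι v =>
    have hv : v = ∑ I, v I • (Pi.single I 1 : Fin (2 * m) → ℂ) := by
      funext J
      rw [Finset.sum_apply, Finset.sum_eq_single J]
      · simp
      · intro b _ hb
        rw [Pi.smul_apply, Pi.single_apply, if_neg (Ne.symm hb), smul_zero]
      · simp
    rw [hv, map_sum]
    refine W.sum_mem fun I _ => ?_
    rw [map_smul]
    exact W.smul_mem _ (by rw [← eCl, ← BB_singleton]; exact hBBW {I})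
  | mul a b ha hb => exact hmul a ha b hb
  | add a b ha hb => exact W.add_mem ha hb

lemma clifford_finite : Module.Finite ℂ (CliffordAlgebra (Qstd m)) :=
  ⟨by rw [← span_BB_top]; exact Submodule.fg_span (Set.finite_range (BB (m := m)))⟩

lemma clifford_finrank_le :
    Module.finrank ℂ (CliffordAlgebra (Qstd m)) ≤ 2 ^ (2 * m) := by
  classical
  have h := finrank_span_le_card (R := ℂ) (Set.range (BB (m := m)))
  rw [span_BB_top, finrank_top] at h
  refine h.trans ?_
  rw [Set.toFinset_range]
  calc (Finset.univ.image (BB (m := m))).card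
      ≤ Finset.univ.card := Finset.card_image_le
    _ = 2 ^ (2 * m) := by rw [Finset.card_univ, Fintype.card_finset, Fintype.card_fin]

lemma end_finrank :
    Module.finrank ℂ (Module.End ℂ (SpinorSpace m)) = 2 ^ (2 * m) := by
  show Module.finrank ℂ (SpinorSpace m →ₗ[ℂ] SpinorSpace m) = 2 ^ (2 * m)
  rw [Module.finrank_linearMap]
  rw [Module.finrank_fintype_fun_eq_card, Fintype.card_finset, Fintype.card_fin]
  rw [← pow_add, two_mul]

lemma rho_injective : Function.Injective (rho (m := m)) := by
  haveI : Module.Finite ℂ (CliffordAlgebra (Qstd m)) := clifford_finite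
  have hrange : LinearMap.range (rho (m := m)).toLinearMap = ⊤ :=
    LinearMap.range_eq_top.mpr rho_surjective
  have h1 := LinearMap.finrank_range_add_finrank_ker (rho (m := m)).toLinearMap
  rw [hrange, finrank_top] at h1
  have h2 := clifford_finrank_le (m := m)
  rw [end_finrank] at h1
  have hker : Module.finrank ℂ ↥(LinearMap.ker (rho (m := m)).toLinearMap) = 0 := by omega
  have hbot : LinearMap.ker (rho (m := m)).toLinearMap = ⊥ :=
    Submodule.finrank_eq_zero.mp hker
  exact LinearMap.ker_eq_bot.mp hbot

end Spin

/-- there is a unique `ℂ`-algebra homomorphism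
`ρ : ℂCl(2m) → End_ℂ(P)` with `ρ (ι f_I) = Γ_I` for all standard basis vectors `f_I`,
and it is bijective: `ℂCl(2m) ≅ End_ℂ(P)`. -/
theorem cliffordAlgebra_iso_end (m : ℕ) (hm : 1 ≤ m) :
    (∃! ρ : CliffordAlgebra (Qstd m) →ₐ[ℂ] Module.End ℂ (SpinorSpace m),
      ∀ (I : Fin (2 * m)) (f : SpinorSpace m),
        ρ (CliffordAlgebra.ι (Qstd m) (Pi.single I 1)) f = gammaOp I f) ∧
    (∀ ρ : CliffordAlgebra (Qstd m) →ₐ[ℂ] Module.End ℂ (SpinorSpace m),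
      (∀ (I : Fin (2 * m)) (f : SpinorSpace m),
        ρ (CliffordAlgebra.ι (Qstd m) (Pi.single I 1)) f = gammaOp I f) →
      Function.Bijective ρ) := by
  constructor
  · exact ⟨Spin.rho, Spin.rho_prop, fun ρ' h => Spin.rho_unique ρ' h⟩
  · intro ρ' h
    rw [Spin.rho_unique ρ' h]
    exact ⟨Spin.rho_injective, Spin.rho_surjective⟩
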